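/- Let G be a connected finite simple graph and S ⊆ V(G) with α_G(S) ≤ κ_G(S) + 1. Then G has a path covering S (i.e., a 2-ended tree covering S). -/

import Mathlib

open SimpleGraph Set

variable {V : Type*}

/-- The independence number of `S` in `G`: the maximum cardinality of a subset of `S`
that is independent in `G`. -/
noncomputable def indepNumOn (G : SimpleGraph V) (S : Set V) : ℕ :=
  sSup {n | ∃ I : Set V, I ⊆ S ∧ I.Pairwise (fun a b => ¬ G.Adj a b) ∧ I.ncard = n}

/-- `I` is a maximum independent subset of `S` in `G`. -/
def MaxIndepOn (G : SimpleGraph V) (S : Set V) (I : Set V) : Prop :=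
  I ⊆ S ∧ I.Pairwise (fun a b => ¬ G.Adj a b) ∧ I.ncard = indepNumOn G S

/-- Two `x`–`y` walks are internally disjoint if they share only `x` and `y`. -/
def InternallyDisjoint (G : SimpleGraph V) {x y : V} (p q : G.Walk x y) : Prop :=
  ∀ v, v ∈ p.support → v ∈ q.support → v = x ∨ v = y

/-- Local connectivity `κ_G(x,y)`: maximum number of pairwise internally disjoint
`x`–`y` paths in `G`. -/
noncomputable def localConn (G : SimpleGraph V) (x y : V) : ℕ :=
  sSup {n | ∃ P : Set (G.Path x y),
    P.Pairwise (fun p q => InternallyDisjoint G p.1 q.1) ∧ P.ncard = n}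

/-- `κ_G(S)`: the minimum of local connectivities over distinct pairs in `S`,
`+∞` if `S` has at most one element. -/
noncomputable def setConn (G : SimpleGraph V) (S : Set V) : ℕ∞ :=
  ⨅ x ∈ S, ⨅ y ∈ S, ⨅ _ : x ≠ y, (localConn G x y : ℕ∞)

/-- Vertex connectivity `κ(G)`: the maximum `k` such that `G` has more than `k`
vertices and removing fewer than `k` vertices always leaves a connected graph. -/
noncomputable def vertexConn (G : SimpleGraph V) [Fintype V] : ℕ :=
  sSup {k | k < Fintype.card V ∧ ∀ X : Finset V, X.card < k →
    (G.induce ((↑X : Set V)ᶜ)).Connected}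

/-- The set of leaves (vertices of degree one) of a subgraph. -/
def subLeaves {G : SimpleGraph V} (T : G.Subgraph) : Set V :=
  {v | v ∈ T.verts ∧ (T.neighborSet v).ncard = 1}

/-- The set of branch vertices (vertices of degree at least three) of a subgraph. -/
def subBranches {G : SimpleGraph V} (T : G.Subgraph) : Set V :=
  {v | v ∈ T.verts ∧ 3 ≤ (T.neighborSet v).ncard}

section Helpers

open List

/-- Split a list at the first element satisfying `P`. -/
lemma exists_first_split {α : Type*} {P : α → Prop} :
    ∀ {l : List α}, (∃ x ∈ l, P x) →
      ∃ l₁ a l₂, l = l₁ ++ a :: l₂ ∧ P a ∧ ∀ x ∈ l₁, ¬ P x := by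
  intro l
  induction l with
  | nil => rintro ⟨x, hx, -⟩; simp at hx
  | cons y l ih =>
    intro h
    by_cases hy : P y
    · exact ⟨[], y, l, by simp, hy, by simp⟩
    · obtain ⟨x, hx, hPx⟩ := h
      rcases List.mem_cons.1 hx with rfl | hx
      · exact absurd hPx hy
      · obtain ⟨l₁, a, l₂, rfl, hPa, hl₁⟩ := ih ⟨x, hx, hPx⟩
        exact ⟨y :: l₁, a, l₂, by simp, hPa, by
          intro z hz
          rcases List.mem_cons.1 hz with rfl | hz
          · exact hy
          · exact hl₁ z hz⟩

/-- Uniqueness of the "first element satisfying P" splitting. -/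
lemma first_split_unique {α : Type*} {P : α → Prop} :
    ∀ {M : List α} {b : α} {W M' : List α} {b' : α} {W' : List α},
      M ++ b :: W = M' ++ b' :: W' → (∀ x ∈ M, ¬ P x) → (∀ x ∈ M', ¬ P x) →
      P b → P b' → M = M' ∧ b = b' ∧ W = W' := by
  intro M
  induction M with
  | nil =>
    intro b W M' b' W' heq hM hM' hb hb'
    cases M' with
    | nil => simp_all
    | cons c M'' =>
      simp only [List.nil_append, List.cons_append, List.cons.injEq] at heq
      exact absurd (heq.1 ▸ hb) (hM' c (by simp))
  | cons y M₂ ih =>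
    intro b W M' b' W' heq hM hM' hb hb'
    cases M' with
    | nil =>
      simp only [List.cons_append, List.nil_append, List.cons.injEq] at heq
      exact absurd (heq.1 ▸ hb') (hM y (by simp))
    | cons c M'' =>
      simp only [List.cons_append, List.cons.injEq] at heq
      obtain ⟨h1, h2, h3⟩ := ih heq.2 (fun x hx => hM x (by simp [hx]))
        (fun x hx => hM' x (by simp [hx])) hb hb'
      exact ⟨by rw [heq.1, h1], h2, h3⟩

/-- In a nodup list, splitting at an element is unique. -/
lemma split_unique {α : Type*} {L X : List α} {a : α} {Z X' Z' : List α}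
    (hnd : L.Nodup) (h1 : L = X ++ a :: Z) (h2 : L = X' ++ a :: Z') :
    X = X' ∧ Z = Z' := by
  have := first_split_unique (P := fun x => x = a) (h1.symm.trans h2) ?_ ?_ rfl rfl
  · exact ⟨this.1, this.2.2⟩
  · rw [h1, List.nodup_append'] at hnd
    intro x hx rfl
    exact hnd.2.2 hx (List.mem_cons.2 (Or.inl rfl))
  · rw [h2, List.nodup_append'] at hnd
    intro x hx rfl
    exact hnd.2.2 hx (List.mem_cons.2 (Or.inl rfl))

/-- Order in a nodup list: if `a'` occurs after `a`, then `a` occurs before `a'`. -/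
lemma split_order {α : Type*} :
    ∀ {L X : List α} {a : α} {Z X' : List α} {a' : α} {Z' : List α}, L.Nodup →
      L = X ++ a :: Z → L = X' ++ a' :: Z' → a' ∈ Z → a ∈ X' := by
  intro L
  induction L with
  | nil => intro X a Z X' a' Z' _ h1 _ _; exact absurd h1 (by simp)
  | cons y L ih =>
    intro X a Z X' a' Z' hnd h1 h2 hmem
    cases X with
    | nil =>
      simp only [List.nil_append, List.cons.injEq] at h1
      cases X' with
      | nil =>
        simp only [List.nil_append, List.cons.injEq] at h2
        exfalso
        apply (List.nodup_cons.1 hnd).1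
        rw [h1.2]
        rw [h2.1]
        exact hmem
      | cons c X'' =>
        simp only [List.cons_append, List.cons.injEq] at h2
        rw [← h1.1, h2.1]
        exact List.mem_cons_self
    | cons x X₂ =>
      simp only [List.cons_append, List.cons.injEq] at h1
      cases X' with
      | nil =>
        simp only [List.nil_append, List.cons.injEq] at h2
        exfalso
        apply (List.nodup_cons.1 hnd).1
        rw [h1.2]
        refine List.mem_append.2 (Or.inr (List.mem_cons.2 (Or.inr ?_)))
        rw [h2.1]
        exact hmem
      | cons c X'' =>
        simp only [List.cons_append, List.cons.injEq] at h2
        exact List.mem_cons.2 (Or.inr (ih (List.nodup_cons.1 hnd).2 h1.2 h2.2 hmem))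

/-- Reversing preserves adjacency chains. -/
lemma chain'_reverse_adj {G : SimpleGraph V} {l : List V} (h : l.Chain' G.Adj) :
    l.reverse.Chain' G.Adj := by
  change List.IsChain _ _
  rw [List.isChain_reverse]
  exact h.imp (fun a b hab => hab.symm)

/-- Build a walk from a nonempty adjacency chain. -/
lemma walk_of_list (G : SimpleGraph V) :
    ∀ (l : List V), l.Chain' G.Adj → l ≠ [] → ∃ (u : V) (v : V) (p : G.Walk u v), p.support = l := by
  intro l
  induction l with
  | nil => intro _ h; exact absurd rfl h
  | cons a l ih =>
    intro hc _
    cases l with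
    | nil => exact ⟨a, a, Walk.nil, by simp⟩
    | cons b l' =>
      obtain ⟨u, v, p, hp⟩ := ih (List.isChain_cons_cons.1 hc).2 (by simp)
      have hu : u = b := by
        have := p.support_eq_cons
        rw [hp] at this
        exact (List.cons.injEq .. ▸ this).1.symm
      subst hu
      exact ⟨a, v, Walk.cons (List.isChain_cons_cons.1 hc).1 p, by simp [hp]⟩

/-- A candidate list: a path whose endpoints lie in `S`. -/
def GoodList (G : SimpleGraph V) (S : Set V) (l : List V) : Prop :=
  l.Chain' G.Adj ∧ l.Nodup ∧ (∀ x ∈ l.head?, x ∈ S) ∧ (∀ x ∈ l.getLast?, x ∈ S)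

section Constructions

variable {G : SimpleGraph V} {S : Set V} {s : V} {L : List V}

/-- C2: the missing vertex is adjacent to the head of the path. -/
lemma contra_head
    (hmax : ∀ l', GoodList G S l' → (∀ x ∈ L, x ∈ S → x ∈ l') → s ∈ l' → False)
    (hLc : L.Chain' G.Adj) (hLnd : L.Nodup)
    (hLl : ∀ x ∈ L.getLast?, x ∈ S)
    (hsS : s ∈ S) (hsL : s ∉ L)
    {x : V} (hx : L.head? = some x) (hadj : G.Adj s x) : False := by
  apply hmax (s :: L)
  · refine ⟨?_, ?_, ?_, ?_⟩
    · change List.IsChain _ _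
      rw [List.isChain_cons]
      exact ⟨fun y hy => by rw [hx] at hy; rw [Option.mem_some_iff] at hy; exact hy ▸ hadj, hLc⟩
    · exact List.nodup_cons.2 ⟨hsL, hLnd⟩
    · intro y hy
      simp only [List.head?_cons, Option.mem_some_iff] at hy
      exact hy ▸ hsS
    · intro y hy
      have hne : L ≠ [] := by intro h; rw [h] at hx; simp at hx
      have : (s :: L).getLast? = L.getLast? := by
        rw [show s :: L = [s] ++ L from rfl, List.getLast?_append_of_ne_nil _ hne]
      rw [this] at hy
      exact hLl y hy
  · intro z hz _; exact List.mem_cons.2 (Or.inr hz)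
  · exact List.mem_cons_self

/-- C6: a fan path attaches directly at the last vertex of the path. -/
lemma contra_last
    (hmax : ∀ l', GoodList G S l' → (∀ x ∈ L, x ∈ S → x ∈ l') → s ∈ l' → False)
    (hLc : L.Chain' G.Adj) (hLnd : L.Nodup)
    (hLh : ∀ x ∈ L.head?, x ∈ S)
    (hsS : s ∈ S)
    {F₀ : List V} {t : V}
    (hF : (F₀ ++ [t]).Chain' G.Adj) (hFnd : F₀.Nodup)
    (hFoff : ∀ x ∈ F₀, x ∉ L) (hFh : F₀.head? = some s)
    (ht : L.getLast? = some t) : False := by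
  apply hmax (L ++ F₀.reverse)
  · refine ⟨?_, ?_, ?_, ?_⟩
    · refine List.isChain_append.2 ⟨hLc, (by
        rw [List.isChain_reverse]
        exact (hF.prefix ⟨[t], rfl⟩).imp (fun a b hab => hab.symm)), ?_⟩
      intro x hx y hy
      rw [ht, Option.mem_some_iff] at hx
      subst hx
      rw [List.head?_reverse] at hy
      -- y is the last of F₀, adjacent to t by hF
      have := (List.isChain_append.1 hF).2.2 y hy t (by simp)
      exact this.symm
    · rw [List.nodup_append']
      exact ⟨hLnd, List.nodup_reverse.2 hFnd, fun a ha ha' => hFoff a (List.mem_reverse.1 ha') ha⟩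
    · intro y hy
      have hne : L ≠ [] := by intro h; rw [h] at ht; simp at ht
      rw [List.head?_append_of_ne_nil _ hne] at hy
      exact hLh y hy
    · intro y hy
      have hne : F₀ ≠ [] := by intro h; rw [h] at hFh; simp at hFh
      have : (L ++ F₀.reverse).getLast? = F₀.reverse.getLast? := by
        rw [List.getLast?_append_of_ne_nil]
        simpa using hne
      rw [this, List.getLast?_reverse, hFh, Option.mem_some_iff] at hy
      exact hy ▸ hsS
  · intro z hz _; exact List.mem_append.2 (Or.inl hz)
  · refine List.mem_append.2 (Or.inr (List.mem_reverse.2 ?_))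
    exact List.mem_of_mem_head? hFh

end Constructions

section Rotations

variable {G : SimpleGraph V} {S : Set V} {s : V} {L : List V}

/-- C1: the missing vertex `s` is adjacent to the first `S`-vertex `b` after an
attachment point `a` of a fan path `F₀` from `s`. -/
lemma contra_s_adj_b
    (hmax : ∀ l', GoodList G S l' → (∀ x ∈ L, x ∈ S → x ∈ l') → s ∈ l' → False)
    (hLc : L.Chain' G.Adj) (hLnd : L.Nodup)
    (hLh : ∀ x ∈ L.head?, x ∈ S) (hLl : ∀ x ∈ L.getLast?, x ∈ S)
    (hsS : s ∈ S) (hsL : s ∉ L)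
    {F₀ : List V} {a : V} {X M W : List V} {b : V}
    (hF : (F₀ ++ [a]).Chain' G.Adj) (hFnd : F₀.Nodup)
    (hFoff : ∀ x ∈ F₀, x ∉ L) (hFh : F₀.head? = some s)
    (hdec : L = X ++ a :: (M ++ b :: W))
    (hM : ∀ x ∈ M, x ∉ S)
    (hadj : G.Adj s b) : False := by
  classical
  have hFne : F₀ ≠ [] := by intro h; rw [h] at hFh; simp at hFh
  set D := (F₀ ++ [a]).reverse with hD
  have hDne : D ≠ [] := by simp [hD]
  have hDh : D.head? = some a := by
    rw [hD, List.head?_reverse, List.getLast?_concat]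
  have hDl : D.getLast? = some s := by
    rw [hD, List.getLast?_reverse, List.head?_append_of_ne_nil _ hFne, hFh]
  have hDc : D.Chain' G.Adj := by
    rw [hD]
    change List.IsChain _ _
    rw [List.isChain_reverse]
    exact hF.imp (fun u v huv => huv.symm)
  have haL : a ∈ L := by rw [hdec]; simp
  have hDmem : ∀ x ∈ D, x = a ∨ x ∈ F₀ := by
    intro x hx
    rw [hD, List.mem_reverse, List.mem_append] at hx
    rcases hx with hx | hx
    · exact Or.inr hx
    · simp only [List.mem_singleton] at hx
      exact Or.inl hx
  have hsD : s ∈ D := by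
    rw [hD, List.mem_reverse, List.mem_append]
    exact Or.inl (List.mem_of_mem_head? hFh)
  -- nodup components of L
  have hnd' := hLnd
  rw [hdec, List.nodup_append', List.nodup_cons, List.nodup_append', List.nodup_cons] at hnd'
  obtain ⟨hXnd, ⟨haMbW, hMnd, hbWnd, hMdisj⟩, hXdisj⟩ := hnd'
  have hbWnd' : (b :: W).Nodup := List.nodup_cons.2 hbWnd
  have hDnd : D.Nodup := by
    rw [hD, List.nodup_reverse, List.nodup_append']
    refine ⟨hFnd, by simp, ?_⟩
    intro x hx hx'
    rw [List.mem_singleton] at hx'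
    exact hFoff x hx (hx' ▸ haL)
  -- the new list
  apply hmax (X ++ (D ++ b :: W))
  · refine ⟨?_, ?_, ?_, ?_⟩
    · refine List.isChain_append.2 ⟨hLc.prefix ⟨a :: (M ++ b :: W), hdec.symm⟩, ?_, ?_⟩
      · refine List.isChain_append.2 ⟨hDc, (hLc.suffix ?_), ?_⟩
        · exact ⟨X ++ a :: M, by rw [hdec]; simp⟩
        · intro x hx y hy
          rw [hDl, Option.mem_some_iff] at hx
          rw [List.head?_cons, Option.mem_some_iff] at hy
          exact hx ▸ hy ▸ hadj
      · intro x hx y hy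
        rw [List.head?_append_of_ne_nil _ hDne, hDh, Option.mem_some_iff] at hy
        subst hy
        have hc := hLc
        rw [hdec] at hc
        change List.IsChain _ _ at hc
        rw [List.isChain_append] at hc
        exact hc.2.2 x hx a (by simp)
    · rw [List.nodup_append', List.nodup_append']
      refine ⟨hXnd, ⟨hDnd, hbWnd', ?_⟩, ?_⟩
      · intro x hx hx'
        rcases hDmem x hx with rfl | hx₀
        · exact haMbW (List.mem_append.2 (Or.inr hx'))
        · exact hFoff x hx₀ (by rw [hdec]; simp [hx'])
      · intro x hx hx'
        rcases List.mem_append.1 hx' with hx' | hx'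
        · rcases hDmem x hx' with rfl | hx₀
          · exact hXdisj hx (by simp)
          · exact hFoff x hx₀ (by rw [hdec]; simp [hx])
        · exact hXdisj hx (by simp [List.mem_cons.1 hx'])
    · intro y hy
      rcases eq_or_ne X [] with rfl | hXne
      · rw [List.nil_append, List.head?_append_of_ne_nil _ hDne, hDh] at hy
        rw [Option.mem_some_iff] at hy
        subst hy
        apply hLh
        rw [hdec]; simp
      · rw [List.head?_append_of_ne_nil _ hXne] at hy
        apply hLh
        rw [hdec, List.head?_append_of_ne_nil _ hXne]
        exact hy
    · intro y hy
      have h1 : (X ++ (D ++ b :: W)).getLast? = (b :: W).getLast? := by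
        rw [List.getLast?_append_of_ne_nil _ (by simp : (D ++ b :: W) ≠ []),
          List.getLast?_append_of_ne_nil _ (by simp : (b : V) :: W ≠ [])]
      rw [h1] at hy
      apply hLl
      rw [hdec, List.getLast?_append_of_ne_nil _ (by simp : a :: (M ++ b :: W) ≠ [])]
      rw [show a :: (M ++ b :: W) = (a :: M) ++ b :: W by simp,
        List.getLast?_append_of_ne_nil _ (by simp : (b : V) :: W ≠ [])]
      exact hy
  · intro z hz hzS
    rw [hdec] at hz
    simp only [List.mem_append, List.mem_cons] at hz ⊢
    rcases hz with hz | rfl | hz | hz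
    · exact Or.inl hz
    · exact Or.inr (Or.inl (by rw [hD]; simp))
    · exact absurd hzS (hM z hz)
    · exact Or.inr (Or.inr hz)
  · exact List.mem_append.2 (Or.inr (List.mem_append.2 (Or.inl hsD)))

/-- C4: the head of the path is adjacent to the first `S`-vertex `b` after an
attachment point `a` of a fan path `F₀` from `s`. -/
lemma contra_head_adj_b
    (hmax : ∀ l', GoodList G S l' → (∀ x ∈ L, x ∈ S → x ∈ l') → s ∈ l' → False)
    (hLc : L.Chain' G.Adj) (hLnd : L.Nodup)
    (hLl : ∀ x ∈ L.getLast?, x ∈ S)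
    (hsS : s ∈ S)
    {F₀ : List V} {a : V} {X M W : List V} {b h₀ : V}
    (hF : (F₀ ++ [a]).Chain' G.Adj) (hFnd : F₀.Nodup)
    (hFoff : ∀ x ∈ F₀, x ∉ L) (hFh : F₀.head? = some s)
    (hdec : L = X ++ a :: (M ++ b :: W))
    (hM : ∀ x ∈ M, x ∉ S)
    (hh₀ : L.head? = some h₀)
    (hadj : G.Adj h₀ b) : False := by
  classical
  have hFne : F₀ ≠ [] := by intro h; rw [h] at hFh; simp at hFh
  set E := (X ++ [a]).reverse with hE
  have hEne : E ≠ [] := by simp [hE]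
  have hEh : E.head? = some a := by
    rw [hE, List.head?_reverse, List.getLast?_concat]
  have hEl : E.getLast? = some h₀ := by
    rw [hE, List.getLast?_reverse]
    rw [hdec] at hh₀
    cases X with
    | nil =>
      simp only [List.nil_append, List.head?_cons, Option.some.injEq] at hh₀
      simp [hh₀]
    | cons c X' =>
      rw [List.head?_append_of_ne_nil _ (by simp)]
      simpa using hh₀
  have hEc : E.Chain' G.Adj := by
    rw [hE]
    change List.IsChain _ _
    rw [List.isChain_reverse]
    refine (hLc.prefix ⟨M ++ b :: W, by rw [hdec]; simp⟩).imp (fun u v huv => huv.symm)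
  have hEmem : ∀ x ∈ E, x ∈ X ∨ x = a := by
    intro x hx
    rw [hE, List.mem_reverse, List.mem_append] at hx
    rcases hx with hx | hx
    · exact Or.inl hx
    · simp only [List.mem_singleton] at hx
      exact Or.inr hx
  -- nodup components of L
  have hnd' := hLnd
  rw [hdec, List.nodup_append', List.nodup_cons, List.nodup_append', List.nodup_cons] at hnd'
  obtain ⟨hXnd, ⟨haMbW, hMnd, hbWnd, hMdisj⟩, hXdisj⟩ := hnd'
  have hbWnd' : (b :: W).Nodup := List.nodup_cons.2 hbWnd
  have hEnd : E.Nodup := by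
    rw [hE, List.nodup_reverse, List.nodup_append']
    refine ⟨hXnd, by simp, ?_⟩
    intro x hx hx'
    rw [List.mem_singleton] at hx'
    exact hXdisj hx (by simp [hx'])
  apply hmax (F₀ ++ (E ++ b :: W))
  · refine ⟨?_, ?_, ?_, ?_⟩
    · refine List.isChain_append.2 ⟨hF.prefix ⟨[a], rfl⟩, ?_, ?_⟩
      · refine List.isChain_append.2 ⟨hEc, (hLc.suffix ⟨X ++ a :: M, by rw [hdec]; simp⟩), ?_⟩
        intro x hx y hy
        rw [hEl, Option.mem_some_iff] at hx
        rw [List.head?_cons, Option.mem_some_iff] at hy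
        exact hx ▸ hy ▸ hadj
      · intro x hx y hy
        rw [List.head?_append_of_ne_nil _ hEne, hEh, Option.mem_some_iff] at hy
        have := (List.isChain_append.1 hF).2.2 x hx a (by simp)
        exact hy ▸ this
    · rw [List.nodup_append', List.nodup_append']
      refine ⟨hFnd, ⟨hEnd, hbWnd', ?_⟩, ?_⟩
      · intro x hx hx'
        rcases hEmem x hx with hx₀ | rfl
        · exact hXdisj hx₀ (by simp [List.mem_cons.1 hx'])
        · exact haMbW (List.mem_append.2 (Or.inr hx'))
      · intro x hx hx'
        rcases List.mem_append.1 hx' with hx' | hx'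
        · rcases hEmem x hx' with hx₀ | rfl
          · exact hFoff x hx (by rw [hdec]; simp [hx₀])
          · exact hFoff x hx (by rw [hdec]; simp)
        · exact hFoff x hx (by rw [hdec]; simp [List.mem_cons.1 hx'])
    · intro y hy
      rw [List.head?_append_of_ne_nil _ hFne, hFh, Option.mem_some_iff] at hy
      exact hy ▸ hsS
    · intro y hy
      have h1 : (F₀ ++ (E ++ b :: W)).getLast? = (b :: W).getLast? := by
        rw [List.getLast?_append_of_ne_nil _ (by simp : (E ++ b :: W) ≠ []),
          List.getLast?_append_of_ne_nil _ (by simp : (b : V) :: W ≠ [])]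
      rw [h1] at hy
      apply hLl
      rw [hdec, List.getLast?_append_of_ne_nil _ (by simp : a :: (M ++ b :: W) ≠ []),
        show a :: (M ++ b :: W) = (a :: M) ++ b :: W by simp,
        List.getLast?_append_of_ne_nil _ (by simp : (b : V) :: W ≠ [])]
      exact hy
  · intro z hz hzS
    rw [hdec] at hz
    simp only [List.mem_append, List.mem_cons] at hz ⊢
    rcases hz with hz | rfl | hz | hz
    · exact Or.inr (Or.inl (by rw [hE]; simp [hz]))
    · exact Or.inr (Or.inl (by rw [hE]; simp))
    · exact absurd hzS (hM z hz)
    · exact Or.inr (Or.inr hz)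
  · exact List.mem_append.2 (Or.inl (List.mem_of_mem_head? hFh))

/-- Core two-fan rotation: the path runs to `a`, out to `s` via one fan, back in via a
second fan to a later attachment `a'`, then continues along an abstract tail `R`. -/
lemma contra_two_fans
    (hmax : ∀ l', GoodList G S l' → (∀ x ∈ L, x ∈ S → x ∈ l') → s ∈ l' → False)
    (hLc : L.Chain' G.Adj) (hLnd : L.Nodup)
    (hLh : ∀ x ∈ L.head?, x ∈ S) (hLl : ∀ x ∈ L.getLast?, x ∈ S)
    {F₀ F₀' : List V} {a a' : V} {X M₁ Z₂ R : List V}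
    (hF : (F₀ ++ [a]).Chain' G.Adj) (hFnd : F₀.Nodup)
    (hFoff : ∀ x ∈ F₀, x ∉ L) (hFh : F₀.head? = some s)
    (hF' : (F₀' ++ [a']).Chain' G.Adj) (hF'nd : F₀'.Nodup)
    (hF'off : ∀ x ∈ F₀', x ∉ L) (hF'h : F₀'.head? = some s)
    (hFF' : ∀ x ∈ F₀, x ∈ F₀' → x = s)
    (hdec : L = X ++ a :: (M₁ ++ a' :: Z₂))
    (hcov : ∀ x ∈ M₁ ++ a' :: Z₂, x ∈ S → x ∈ a' :: R)
    (hRc : R.Chain' G.Adj) (hRne : R ≠ [])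
    (hjun : ∀ y ∈ R.head?, G.Adj a' y)
    (hRlast : R.getLast? = L.getLast?)
    (hRsub : ∀ x ∈ R, x ∈ M₁ ∨ x ∈ Z₂)
    (hRnd : R.Nodup) : False := by
  classical
  have hFne : F₀ ≠ [] := by intro h; rw [h] at hFh; simp at hFh
  have hF'ne : F₀' ≠ [] := by intro h; rw [h] at hF'h; simp at hF'h
  have hF'eq : F₀' = s :: F₀'.tail := (List.cons_head?_tail hF'h).symm
  have haL : a ∈ L := by rw [hdec]; simp
  have ha'L : a' ∈ L := by rw [hdec]; simp
  set D := (F₀ ++ [a]).reverse with hD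
  set U := F₀'.tail ++ [a'] with hU
  have hDne : D ≠ [] := by simp [hD]
  have hUne : U ≠ [] := by simp [hU]
  have hDh : D.head? = some a := by rw [hD, List.head?_reverse, List.getLast?_concat]
  have hDl : D.getLast? = some s := by
    rw [hD, List.getLast?_reverse, List.head?_append_of_ne_nil _ hFne, hFh]
  have hUl : U.getLast? = some a' := by rw [hU, List.getLast?_concat]
  have hDc : D.Chain' G.Adj := by
    rw [hD]
    change List.IsChain _ _
    rw [List.isChain_reverse]
    exact hF.imp (fun u v huv => huv.symm)
  have hF'c : (s :: U).Chain' G.Adj := by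
    have : s :: U = F₀' ++ [a'] := by rw [hU, hF'eq]; simp
    rw [this]; exact hF'
  have hUc : U.Chain' G.Adj := (List.isChain_cons.1 hF'c).2
  have hsU : ∀ y ∈ U.head?, G.Adj s y := (List.isChain_cons.1 hF'c).1
  have hDmem : ∀ x ∈ D, x = a ∨ x ∈ F₀ := by
    intro x hx
    rw [hD, List.mem_reverse, List.mem_append] at hx
    rcases hx with hx | hx
    · exact Or.inr hx
    · simp only [List.mem_singleton] at hx
      exact Or.inl hx
  have hsF'tail : s ∉ F₀'.tail := by
    intro h
    rw [hF'eq] at hF'nd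
    exact (List.nodup_cons.1 hF'nd).1 h
  have hUmem : ∀ x ∈ U, x = a' ∨ (x ∈ F₀' ∧ x ≠ s) := by
    intro x hx
    rw [hU, List.mem_append] at hx
    rcases hx with hx | hx
    · refine Or.inr ⟨by rw [hF'eq]; exact List.mem_cons.2 (Or.inr hx), ?_⟩
      rintro rfl; exact hsF'tail hx
    · simp only [List.mem_singleton] at hx
      exact Or.inl hx
  have hsD : s ∈ D := by
    rw [hD, List.mem_reverse, List.mem_append]
    exact Or.inl (List.mem_of_mem_head? hFh)
  -- nodup components of L
  have hnd' := hLnd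
  rw [hdec, List.nodup_append', List.nodup_cons, List.nodup_append', List.nodup_cons] at hnd'
  obtain ⟨hXnd, ⟨haM₁a'Z₂, hM₁nd, ⟨ha'Z₂, hZ₂nd⟩, hM₁disj⟩, hXdisj⟩ := hnd'
  have hDnd : D.Nodup := by
    rw [hD, List.nodup_reverse, List.nodup_append']
    refine ⟨hFnd, by simp, fun x hx hx' => ?_⟩
    rw [List.mem_singleton] at hx'
    exact hFoff x hx (hx' ▸ haL)
  have hUnd : U.Nodup := by
    rw [hU, List.nodup_append']
    refine ⟨(List.nodup_cons.1 (hF'eq ▸ hF'nd)).2, by simp, fun x hx hx' => ?_⟩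
    rw [List.mem_singleton] at hx'
    refine hF'off x ?_ (hx' ▸ ha'L)
    rw [hF'eq]; exact List.mem_cons.2 (Or.inr hx)
  have hRL : ∀ x ∈ R, x ∈ L := by
    intro x hx
    rcases hRsub x hx with h | h <;> rw [hdec] <;> simp [h]
  -- membership zone facts
  have ha'X : a' ∉ X := fun h => hXdisj h (by simp)
  have haa' : a ≠ a' := by rintro rfl; exact haM₁a'Z₂ (by simp)
  have ha'M₁ : a' ∉ M₁ := fun h => hM₁disj h (by simp)
  have hRa : a ∉ R := by
    intro h
    rcases hRsub a h with h' | h'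
    · exact haM₁a'Z₂ (List.mem_append.2 (Or.inl h'))
    · exact haM₁a'Z₂ (List.mem_append.2 (Or.inr (by simp [h'])))
  have hRa' : a' ∉ R := by
    intro h
    rcases hRsub a' h with h' | h'
    · exact ha'M₁ h'
    · exact ha'Z₂ h'
  have hRX : ∀ x ∈ R, x ∉ X := by
    intro x hx hx'
    rcases hRsub x hx with h | h
    · exact hXdisj hx' (by simp [h])
    · exact hXdisj hx' (by simp [h])
  apply hmax (X ++ (D ++ (U ++ R)))
  · refine ⟨?_, ?_, ?_, ?_⟩
    · refine List.isChain_append.2 ⟨hLc.prefix ⟨a :: (M₁ ++ a' :: Z₂), hdec.symm⟩, ?_, ?_⟩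
      · refine List.isChain_append.2 ⟨hDc, ?_, ?_⟩
        · refine List.isChain_append.2 ⟨hUc, hRc, ?_⟩
          intro x hx y hy
          rw [hUl, Option.mem_some_iff] at hx
          exact hx ▸ hjun y hy
        · intro x hx y hy
          rw [hDl, Option.mem_some_iff] at hx
          rw [List.head?_append_of_ne_nil _ hUne] at hy
          exact hx ▸ hsU y hy
      · intro x hx y hy
        rw [List.head?_append_of_ne_nil _ hDne, hDh, Option.mem_some_iff] at hy
        have hc := hLc
        rw [hdec] at hc
        change List.IsChain _ _ at hc
        rw [List.isChain_append] at hc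
        exact hy ▸ hc.2.2 x hx a (by simp)
    · rw [List.nodup_append', List.nodup_append', List.nodup_append']
      refine ⟨hXnd, ⟨hDnd, ⟨hUnd, hRnd, ?_⟩, ?_⟩, ?_⟩
      · -- U disjoint R
        intro x hx hx'
        rcases hUmem x hx with rfl | ⟨hx₀, -⟩
        · exact hRa' hx'
        · exact hF'off x hx₀ (hRL x hx')
      · -- D disjoint (U ++ R)
        intro x hx hx'
        rcases hDmem x hx with rfl | hx₀
        · rcases List.mem_append.1 hx' with h | h
          · rcases hUmem x h with h' | ⟨h', -⟩
            · exact haa' h'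
            · exact hF'off x h' haL
          · exact hRa h
        · rcases List.mem_append.1 hx' with h | h
          · rcases hUmem x h with rfl | ⟨h', hxs⟩
            · exact hFoff x hx₀ ha'L
            · exact hxs (hFF' x hx₀ h')
          · exact hFoff x hx₀ (hRL x h)
      · -- X disjoint (D ++ U ++ R)
        intro x hx hx'
        rcases List.mem_append.1 hx' with h | h
        · rcases hDmem x h with rfl | hx₀
          · exact hXdisj hx (by simp)
          · exact hFoff x hx₀ (by rw [hdec]; simp [hx])
        · rcases List.mem_append.1 h with h | h
          · rcases hUmem x h with rfl | ⟨h', -⟩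
            · exact ha'X hx
            · exact hF'off x h' (by rw [hdec]; simp [hx])
          · exact hRX x h hx
    · intro y hy
      rcases eq_or_ne X [] with rfl | hXne
      · rw [List.nil_append, List.head?_append_of_ne_nil _ hDne, hDh] at hy
        rw [Option.mem_some_iff] at hy
        subst hy
        apply hLh
        rw [hdec]; simp
      · rw [List.head?_append_of_ne_nil _ hXne] at hy
        apply hLh
        rw [hdec, List.head?_append_of_ne_nil _ hXne]
        exact hy
    · intro y hy
      rw [List.getLast?_append_of_ne_nil _ (by simp [hUne, hRne] : D ++ (U ++ R) ≠ []),
        List.getLast?_append_of_ne_nil _ (by simp [hRne] : U ++ R ≠ []),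
        List.getLast?_append_of_ne_nil _ hRne, hRlast] at hy
      exact hLl y hy
  · intro z hz hzS
    rw [hdec] at hz
    simp only [List.mem_append, List.mem_cons] at hz ⊢
    rcases hz with hz | rfl | hz
    · exact Or.inl hz
    · exact Or.inr (Or.inl (by rw [hD]; simp))
    · have := hcov z (by simpa using hz) hzS
      rcases List.mem_cons.1 this with rfl | h
      · exact Or.inr (Or.inr (Or.inl (by rw [hU]; simp)))
      · exact Or.inr (Or.inr (Or.inr h))
  · exact List.mem_append.2 (Or.inr (List.mem_append.2 (Or.inl hsD)))

end Rotations
/-- If `a'` occurs (strictly) before `a` in a nodup list, then `a` occurs after `a'`. -/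
lemma split_order' {α : Type*} :
    ∀ {L X : List α} {a : α} {Z X' : List α} {a' : α} {Z' : List α}, L.Nodup →
      L = X ++ a :: Z → L = X' ++ a' :: Z' → a' ∈ X → a ∈ Z' := by
  intro L
  induction L with
  | nil => intro X a Z X' a' Z' _ h1 _ _; exact absurd h1 (by simp)
  | cons y L ih =>
    intro X a Z X' a' Z' hnd h1 h2 hmem
    cases X with
    | nil => exact absurd hmem (by simp)
    | cons x X₂ =>
      simp only [List.cons_append, List.cons.injEq] at h1
      cases X' with
      | nil =>
        simp only [List.nil_append, List.cons.injEq] at h2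
        rw [← h2.2, h1.2]
        exact List.mem_append.2 (Or.inr (by simp))
      | cons c X₂' =>
        simp only [List.cons_append, List.cons.injEq] at h2
        rcases List.mem_cons.1 hmem with hax | hmem'
        · -- a' is the head y; but a' also occurs in the tail via h2, contradiction
          exfalso
          apply (List.nodup_cons.1 hnd).1
          rw [h1.1, ← hax, h2.2]
          exact List.mem_append.2 (Or.inr (by simp))
        · exact ih (List.nodup_cons.1 hnd).2 h1.2 h2.2 hmem'

end Helpers

open List in
/-- If `G` is connected and `α_G(S) ≤ κ_G(S) + 1`, then `G` has a path covering `S`. -/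
theorem stmt_14 [Fintype V] (G : SimpleGraph V) (hG : G.Connected)
    (S : Set V) (hακ : (indepNumOn G S : ℕ∞) ≤ setConn G S + 1) :
    ∃ (u v : V) (p : G.Walk u v), p.IsPath ∧ S ⊆ {x | x ∈ p.support} := by
  classical
  by_cases hSne : S.Nonempty
  swap
  · obtain ⟨v₀⟩ := hG.nonempty
    exact ⟨v₀, v₀, SimpleGraph.Walk.nil, by simp, fun x hx => absurd ⟨x, hx⟩ hSne⟩
  obtain ⟨t₀, ht₀⟩ := hSne
  -- the maximizer of |S ∩ l| among good lists
  have hfin : ∀ l : List V, (S ∩ {x | x ∈ l}).Finite := fun l => Set.toFinite _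
  have hbdd : BddAbove {n | ∃ l, GoodList G S l ∧ (S ∩ {x | x ∈ l}).ncard = n} := by
    refine ⟨Fintype.card V, ?_⟩
    rintro n ⟨l, -, rfl⟩
    calc (S ∩ {x | x ∈ l}).ncard ≤ (Set.univ : Set V).ncard :=
          Set.ncard_le_ncard (Set.subset_univ _) Set.finite_univ
      _ = Fintype.card V := by rw [Set.ncard_univ, Nat.card_eq_fintype_card]
  have hne𝒩 : {n | ∃ l, GoodList G S l ∧ (S ∩ {x | x ∈ l}).ncard = n}.Nonempty :=
    ⟨_, [t₀], ⟨List.IsChain.singleton _, by simp, by simp [ht₀], by simp [ht₀]⟩, rfl⟩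
  obtain ⟨L, hLgood, hLcnt⟩ :
      ∃ l, GoodList G S l ∧ (S ∩ {x | x ∈ l}).ncard =
        sSup {n | ∃ l, GoodList G S l ∧ (S ∩ {x | x ∈ l}).ncard = n} :=
    Nat.sSup_mem hne𝒩 hbdd
  obtain ⟨hLc, hLnd, hLh, hLl⟩ := hLgood
  have hLmax : ∀ l, GoodList G S l → (S ∩ {x | x ∈ l}).ncard ≤ (S ∩ {x | x ∈ L}).ncard := by
    intro l hl
    rw [hLcnt]
    exact le_csSup hbdd ⟨l, hl, rfl⟩
  by_cases hcov : ∀ x ∈ S, x ∈ L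
  · have hLne : L ≠ [] := by
      intro h
      rw [h] at hcov
      exact absurd (hcov t₀ ht₀) (by simp)
    obtain ⟨u, v, p, hp⟩ := walk_of_list G L hLc hLne
    refine ⟨u, v, p, by rw [SimpleGraph.Walk.isPath_def, hp]; exact hLnd, fun x hx => ?_⟩
    rw [Set.mem_setOf_eq, hp]
    exact hcov x hx
  · push_neg at hcov
    obtain ⟨s, hsS, hsL⟩ := hcov
    -- contradiction machine from maximality
    have hmax : ∀ l', GoodList G S l' → (∀ x ∈ L, x ∈ S → x ∈ l') → s ∈ l' → False := by
      intro l' hg hcv hs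
      have h1 : insert s (S ∩ {x | x ∈ L}) ⊆ S ∩ {x | x ∈ l'} := by
        intro x hx
        rcases Set.mem_insert_iff.1 hx with rfl | ⟨hx1, hx2⟩
        · exact ⟨hsS, hs⟩
        · exact ⟨hx1, hcv x hx2 hx1⟩
      have h2 : (insert s (S ∩ {x | x ∈ L})).ncard = (S ∩ {x | x ∈ L}).ncard + 1 :=
        Set.ncard_insert_of_notMem (fun h => hsL h.2) (hfin L)
      have h3 := Set.ncard_le_ncard h1 (hfin l')
      have h4 := hLmax l' hg
      omega
    have hLne : L ≠ [] := by
      intro h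
      have h1 := hLmax [t₀] ⟨List.IsChain.singleton _, by simp, by simp [ht₀], by simp [ht₀]⟩
      rw [h] at h1
      have h2 : 0 < (S ∩ {x | x ∈ ([t₀] : List V)}).ncard :=
        (Set.ncard_pos (hfin _)).2 ⟨t₀, ht₀, by simp⟩
      have h3 : S ∩ {x : V | x ∈ ([] : List V)} = ∅ := by simp
      rw [h3, Set.ncard_empty] at h1
      omega
    set t := L.getLast hLne with htdef
    have hgl? : L.getLast? = some t := List.getLast?_eq_getLast hLne
    have htL : t ∈ L := List.getLast_mem hLne
    have htS : t ∈ S := hLl t hgl?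
    have hst : s ≠ t := fun h => hsL (h ▸ htL)
    -- the family of internally disjoint s-t paths
    have hbddPfam : BddAbove {n | ∃ P : Set (G.Path s t),
        P.Pairwise (fun p q => InternallyDisjoint G p.1 q.1) ∧ P.ncard = n} := by
      refine ⟨Nat.card (G.Path s t), ?_⟩
      rintro n ⟨P, -, rfl⟩
      calc P.ncard ≤ (Set.univ : Set (G.Path s t)).ncard :=
            Set.ncard_le_ncard (Set.subset_univ _) Set.finite_univ
        _ = Nat.card (G.Path s t) := Set.ncard_univ _
    have hloc : localConn G s t ∈ {n | ∃ P : Set (G.Path s t),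
        P.Pairwise (fun p q => InternallyDisjoint G p.1 q.1) ∧ P.ncard = n} := by
      rw [localConn]
      exact Nat.sSup_mem ⟨0, ∅, by simp, by simp⟩ hbddPfam
    obtain ⟨Pfam, hPfamp, hPfamc⟩ := hloc
    have hPfamfin : Pfam.Finite := Set.toFinite _
    have hsc : setConn G S ≤ (localConn G s t : ℕ∞) := by
      calc setConn G S ≤ ⨅ y ∈ S, ⨅ _ : s ≠ y, (localConn G s y : ℕ∞) := iInf₂_le s hsS
        _ ≤ ⨅ _ : s ≠ t, (localConn G s t : ℕ∞) := iInf₂_le t htS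
        _ ≤ (localConn G s t : ℕ∞) := iInf_le _ hst
    -- fan data
    have hfan : ∀ q : G.Path s t, ∃ (aq : V) (F₀ R : List V), q ∈ Pfam →
        (q.1.support = F₀ ++ aq :: R ∧ F₀.head? = some s ∧ (∀ x ∈ F₀, x ∉ L) ∧
          aq ∈ L ∧ F₀.Nodup ∧ (F₀ ++ [aq]).Chain' G.Adj ∧ aq ≠ t) := by
      intro q
      by_cases hq : q ∈ Pfam
      swap
      · exact ⟨t, [], [], fun h => absurd h hq⟩
      have hsup : q.1.support.Nodup := q.2.support_nodup
      have hchain : q.1.support.Chain' G.Adj := SimpleGraph.Walk.isChain_adj_support q.1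
      obtain ⟨F₀, aq, R, hsupp, haL, hoff⟩ :=
        exists_first_split (l := q.1.support) (P := (· ∈ L)) ⟨t, q.1.end_mem_support, htL⟩
      have hF₀ne : F₀ ≠ [] := by
        intro h
        subst h
        have h2 := q.1.support_eq_cons
        rw [hsupp, List.nil_append] at h2
        have : aq = s := by
          simp only [List.cons.injEq] at h2
          exact h2.1
        exact hsL (this ▸ haL)
      have hFh : F₀.head? = some s := by
        have h2 : q.1.support.head? = some s := by
          rw [q.1.support_eq_cons]
          rfl
        rw [hsupp, List.head?_append_of_ne_nil _ hF₀ne] at h2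
        exact h2
      have hFnd : F₀.Nodup := by
        have : F₀ <+ q.1.support := hsupp ▸ (List.prefix_append F₀ _).sublist
        exact this.nodup hsup
      have hFc : (F₀ ++ [aq]).Chain' G.Adj := by
        refine hchain.prefix ?_
        rw [hsupp]
        exact ⟨R, by simp⟩
      have hat : aq ≠ t := by
        intro h
        subst h
        exact contra_last hmax hLc hLnd hLh hsS hFc hFnd hoff hFh hgl?
      exact ⟨aq, F₀, R, fun _ => ⟨hsupp, hFh, hoff, haL, hFnd, hFc, hat⟩⟩
    choose af Ff Rf hfan using hfan
    -- distinct attachments and fan-fan disjointness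
    have hadist : ∀ q ∈ Pfam, ∀ q' ∈ Pfam, q ≠ q' → af q ≠ af q' := by
      intro q hq q' hq' hne heq
      have m1 : af q ∈ q.1.support := by rw [(hfan q hq).1]; simp
      have m2 : af q ∈ q'.1.support := by rw [(hfan q' hq').1, ← heq]; simp
      rcases hPfamp hq hq' hne (af q) m1 m2 with h | h
      · exact hsL (h ▸ (hfan q hq).2.2.2.1)
      · exact (hfan q hq).2.2.2.2.2.2 h
    have hFF : ∀ q ∈ Pfam, ∀ q' ∈ Pfam, q ≠ q' → ∀ x ∈ Ff q, x ∈ Ff q' → x = s := by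
      intro q hq q' hq' hne x hx hx'
      have m1 : x ∈ q.1.support := by
        rw [(hfan q hq).1]
        exact List.mem_append.2 (Or.inl hx)
      have m2 : x ∈ q'.1.support := by
        rw [(hfan q' hq').1]
        exact List.mem_append.2 (Or.inl hx')
      rcases hPfamp hq hq' hne x m1 m2 with h | h
      · exact h
      · exact absurd (h ▸ htL) ((hfan q hq).2.2.1 x hx)
    -- b data
    have hbex : ∀ q : G.Path s t, ∃ (bq : V) (X M W : List V), q ∈ Pfam →
        (L = X ++ af q :: (M ++ bq :: W) ∧ (∀ x ∈ M, x ∉ S) ∧ bq ∈ S) := by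
      intro q
      by_cases hq : q ∈ Pfam
      swap
      · exact ⟨t, [], [], [], fun h => absurd h hq⟩
      obtain ⟨X, Z, hXZ⟩ := List.append_of_mem ((hfan q hq).2.2.2.1)
      have hZne : Z ≠ [] := by
        rintro rfl
        apply (hfan q hq).2.2.2.2.2.2
        have := hgl?
        rw [hXZ, List.getLast?_concat] at this
        simp only [Option.some.injEq] at this
        exact this
      have htZ : t ∈ Z := by
        have := hgl?
        rw [hXZ, show X ++ af q :: Z = (X ++ [af q]) ++ Z by simp,
          List.getLast?_append_of_ne_nil _ hZne] at this
        exact List.mem_of_mem_getLast? (by rw [this]; rfl)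
      obtain ⟨M, b, W, hZdec, hbS, hM⟩ := exists_first_split (P := (· ∈ S)) ⟨t, htZ, htS⟩
      exact ⟨b, X, M, W, fun _ => ⟨by rw [hXZ, hZdec], hM, hbS⟩⟩
    choose bf Xf Mf Wf hbex using hbex
    -- key: rotations kill equal or adjacent b's (for ordered pairs)
    have haux : ∀ q ∈ Pfam, ∀ q' ∈ Pfam, q ≠ q' → af q' ∈ Mf q ++ bf q :: Wf q →
        (bf q = bf q' → False) ∧ (G.Adj (bf q) (bf q') → False) := by
      intro q hq q' hq' hne h
      obtain ⟨hdq, hMq, hbqS⟩ := hbex q hq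
      obtain ⟨hdq', hMq', hbq'S⟩ := hbex q' hq'
      obtain ⟨-, hFh, hFoff, haL, hFnd, hFc, hat⟩ := hfan q hq
      obtain ⟨-, hFh', hFoff', haL', hFnd', hFc', hat'⟩ := hfan q' hq'
      have hFF' := hFF q hq q' hq' hne
      rcases List.mem_append.1 h with hM | hbW
      · -- a' is strictly between a and b: rotation with no S-vertex lost
        obtain ⟨M₁, M₂, hMdec⟩ := List.append_of_mem hM
        have hdecA : L = Xf q ++ af q :: (M₁ ++ af q' :: (M₂ ++ bf q :: Wf q)) := by
          rw [hdq, hMdec]; simp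
        have hfalse : False := by
          refine contra_two_fans (R := M₂ ++ bf q :: Wf q) hmax hLc hLnd hLh hLl
            hFc hFnd hFoff hFh hFc' hFnd' hFoff' hFh' hFF' hdecA ?_ ?_ (by simp) ?_ ?_ ?_ ?_
          · -- hcov
            intro x hx hxS
            rcases List.mem_append.1 hx with hx | hx
            · exact absurd hxS (hMq x (by rw [hMdec]; exact List.mem_append.2 (Or.inl hx)))
            · exact hx
          · -- hRc
            exact hLc.suffix ⟨Xf q ++ af q :: (M₁ ++ [af q']), by rw [hdecA]; simp⟩
          · -- hjun
            have hc : (af q' :: (M₂ ++ bf q :: Wf q)).Chain' G.Adj :=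
              hLc.suffix ⟨Xf q ++ af q :: M₁, by rw [hdecA]; simp⟩
            exact (List.isChain_cons.1 hc).1
          · -- hRlast
            rw [hdecA, show Xf q ++ af q :: (M₁ ++ af q' :: (M₂ ++ bf q :: Wf q)) =
              (Xf q ++ af q :: (M₁ ++ [af q'])) ++ (M₂ ++ bf q :: Wf q) by simp]
            exact (List.getLast?_append_of_ne_nil _ (by simp)).symm
          · -- hRsub
            exact fun x hx => Or.inr hx
          · -- hRnd
            exact (List.IsSuffix.sublist
              ⟨Xf q ++ af q :: (M₁ ++ [af q']), by rw [hdecA]; simp⟩).nodup hLnd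
        exact ⟨fun _ => hfalse, fun _ => hfalse⟩
      · -- a' lies at or after b
        obtain ⟨Y, Z₂, hYdec⟩ := List.append_of_mem hbW
        have hdecB : L = (Xf q ++ af q :: (Mf q ++ Y)) ++ af q' :: Z₂ := by
          rw [hdq, hYdec]; simp
        have hZ₂ : Z₂ = Mf q' ++ bf q' :: Wf q' := (split_unique hLnd hdecB hdq').2
        have hbWnd : (bf q :: Wf q).Nodup :=
          (List.IsSuffix.sublist ⟨Xf q ++ af q :: Mf q, by rw [hdq]; simp⟩).nodup hLnd
        have hYdisj : ∀ x ∈ Y, x ∉ af q' :: Z₂ := by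
          have := hbWnd
          rw [hYdec, List.nodup_append'] at this
          exact fun x hx hx' => this.2.2 hx hx'
        constructor
        · -- injectivity
          intro heq
          have hb'Z₂ : bf q' ∈ Z₂ := by rw [hZ₂]; simp
          cases hY : Y with
          | nil =>
            rw [hY, List.nil_append, List.cons.injEq] at hYdec
            -- b = a'
            have : af q' ∈ Z₂ := by rw [← hYdec.1, heq]; exact hb'Z₂
            have hndB := hLnd
            rw [hdecB, List.nodup_append', List.nodup_cons] at hndB
            exact hndB.2.1.1 this
          | cons c Y₂ =>
            have hcY : c = bf q := by
              rw [hY] at hYdec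
              simp only [List.cons_append, List.cons.injEq] at hYdec
              exact hYdec.1.symm
            refine hYdisj (bf q) (by rw [hY, hcY]; simp) ?_
            rw [heq]
            exact List.mem_cons.2 (Or.inr hb'Z₂)
        · -- adjacency
          intro hadj
          have hYa' : (Y ++ [af q']).Chain' G.Adj :=
            hLc.infix ⟨Xf q ++ af q :: Mf q, Z₂, by rw [hdq, hYdec]; simp⟩
          have hYh : Y ≠ [] → Y.head? = some (bf q) := by
            intro hYne
            have : (bf q :: Wf q).head? = (Y ++ af q' :: Z₂).head? := by rw [hYdec]
            rw [List.head?_cons, List.head?_append_of_ne_nil _ hYne] at this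
            exact this.symm
          refine contra_two_fans (R := Y.reverse ++ bf q' :: Wf q') hmax hLc hLnd hLh hLl
            hFc hFnd hFoff hFh hFc' hFnd' hFoff' hFh' hFF'
            (show L = Xf q ++ af q :: ((Mf q ++ Y) ++ af q' :: Z₂) by rw [hdq, hYdec]; simp)
            ?_ ?_ (by simp) ?_ ?_ ?_ ?_
          · -- hcov
            intro x hx hxS
            rcases List.mem_append.1 hx with hx | hx
            · rcases List.mem_append.1 hx with hx | hx
              · exact absurd hxS (hMq x hx)
              · exact List.mem_cons.2 (Or.inr (List.mem_append.2 (Or.inl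
                  (List.mem_reverse.2 hx))))
            · rcases List.mem_cons.1 hx with rfl | hx
              · exact List.mem_cons_self
              · rw [hZ₂] at hx
                rcases List.mem_append.1 hx with hx | hx
                · exact absurd hxS (hMq' x hx)
                · exact List.mem_cons.2 (Or.inr (List.mem_append.2 (Or.inr hx)))
          · -- hRc
            refine List.isChain_append.2 ⟨?_, ?_, ?_⟩
            · rw [List.isChain_reverse]
              exact (hYa'.prefix ⟨[af q'], rfl⟩).imp (fun u v huv => huv.symm)
            · exact hLc.suffix ⟨Xf q' ++ af q' :: Mf q', by rw [hdq']; simp⟩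
            · intro x hx y hy
              rw [List.getLast?_reverse] at hx
              have hYne : Y ≠ [] := by rintro rfl; simp at hx
              rw [hYh hYne, Option.mem_some_iff] at hx
              rw [List.head?_cons, Option.mem_some_iff] at hy
              exact hx ▸ hy ▸ hadj
          · -- hjun
            intro y hy
            cases hY : Y with
            | nil =>
              rw [hY, List.reverse_nil, List.nil_append, List.head?_cons,
                Option.mem_some_iff] at hy
              have hba' : bf q = af q' := by
                rw [hY, List.nil_append, List.cons.injEq] at hYdec
                exact hYdec.1
              exact hy ▸ hba' ▸ hadj
            | cons c Y₂ =>
              have hYne : Y ≠ [] := by rw [hY]; simp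
              rw [List.head?_append_of_ne_nil _ (by rw [hY]; simp), List.head?_reverse] at hy
              have := (List.isChain_append.1 hYa').2.2 y (by rw [hY] at hy ⊢; exact hy)
                (af q') (by simp)
              exact this.symm
          · -- hRlast
            rw [List.getLast?_append_of_ne_nil _ (by simp : bf q' :: Wf q' ≠ []),
              hdq', show Xf q' ++ af q' :: (Mf q' ++ bf q' :: Wf q') =
                (Xf q' ++ af q' :: Mf q') ++ (bf q' :: Wf q') by simp]
            exact (List.getLast?_append_of_ne_nil _ (by simp)).symm
          · -- hRsub
            intro x hx
            rcases List.mem_append.1 hx with hx | hx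
            · exact Or.inl (List.mem_append.2 (Or.inr (List.mem_reverse.1 hx)))
            · exact Or.inr (by rw [hZ₂]; exact List.mem_append.2 (Or.inr hx))
          · -- hRnd
            rw [List.nodup_append']
            refine ⟨List.nodup_reverse.2 ((List.IsInfix.sublist
                ⟨Xf q ++ af q :: Mf q, af q' :: Z₂, by rw [hdq, hYdec]; simp⟩).nodup hLnd),
              (List.IsSuffix.sublist ⟨Xf q' ++ af q' :: Mf q', by
                rw [hdq']; simp⟩).nodup hLnd, ?_⟩
            intro x hx hx'
            refine hYdisj x (List.mem_reverse.1 hx) ?_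
            exact List.mem_cons.2 (Or.inr (by rw [hZ₂]; exact List.mem_append.2 (Or.inr hx')))
    have horder : ∀ q ∈ Pfam, ∀ q' ∈ Pfam, q ≠ q' →
        (af q' ∈ Mf q ++ bf q :: Wf q) ∨ (af q ∈ Mf q' ++ bf q' :: Wf q') := by
      intro q hq q' hq' hne
      have hdq := (hbex q hq).1
      have hdq' := (hbex q' hq').1
      have hmem : af q' ∈ L := (hfan q' hq').2.2.2.1
      rw [hdq] at hmem
      rcases List.mem_append.1 hmem with h | h
      · exact Or.inr (split_order' hLnd hdq hdq' h)
      · rcases List.mem_cons.1 h with h | h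
        · exact absurd h (hadist q' hq' q hq (Ne.symm hne))
        · exact Or.inl h
    have hbinj : Set.InjOn bf Pfam := by
      intro q hq q' hq' heq
      by_contra hne
      rcases horder q hq q' hq' hne with h | h
      · exact (haux q hq q' hq' hne h).1 heq
      · exact (haux q' hq' q hq (Ne.symm hne) h).1 heq.symm
    have hbadj : ∀ q ∈ Pfam, ∀ q' ∈ Pfam, q ≠ q' → ¬ G.Adj (bf q) (bf q') := by
      intro q hq q' hq' hne hadj
      rcases horder q hq q' hq' hne with h | h
      · exact (haux q hq q' hq' hne h).2 hadj
      · exact (haux q' hq' q hq (Ne.symm hne) h).2 hadj.symm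
    -- the independent set
    set h₀ := L.head hLne with hh₀def
    have hh₀? : L.head? = some h₀ := List.head?_eq_head hLne
    have hh₀S : h₀ ∈ S := hLh h₀ hh₀?
    have hh₀L : h₀ ∈ L := List.head_mem hLne
    have hbL : ∀ q ∈ Pfam, bf q ∈ L := by
      intro q hq
      rw [(hbex q hq).1]
      simp
    have hh₀b : ∀ q ∈ Pfam, h₀ ≠ bf q := by
      intro q hq heq
      have hdq := (hbex q hq).1
      have hbZ : bf q ∈ Mf q ++ bf q :: Wf q := by simp
      have hnd2 := hLnd
      rw [hdq, List.nodup_append', List.nodup_cons] at hnd2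
      obtain ⟨hXnd, ⟨haZ, hZnd⟩, hXdisj⟩ := hnd2
      have hh := hh₀?
      rw [hdq] at hh
      cases hX : Xf q with
      | nil =>
        rw [hX, List.nil_append, List.head?_cons, Option.some.injEq] at hh
        exact haZ (hh ▸ heq ▸ hbZ)
      | cons c X₂ =>
        rw [hX, List.head?_append_of_ne_nil _ (by simp), List.head?_cons,
          Option.some.injEq] at hh
        refine hXdisj (hX ▸ hh ▸ List.mem_cons_self : h₀ ∈ Xf q) ?_
        exact List.mem_cons.2 (Or.inr (heq ▸ hbZ))
    have hsb : ∀ q ∈ Pfam, ¬ G.Adj s (bf q) := by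
      intro q hq hadj
      exact contra_s_adj_b hmax hLc hLnd hLh hLl hsS hsL
        ((hfan q hq).2.2.2.2.2.1) ((hfan q hq).2.2.2.2.1) ((hfan q hq).2.2.1)
        ((hfan q hq).2.1) ((hbex q hq).1) ((hbex q hq).2.1) hadj
    have hh₀badj : ∀ q ∈ Pfam, ¬ G.Adj h₀ (bf q) := by
      intro q hq hadj
      exact contra_head_adj_b hmax hLc hLnd hLl hsS
        ((hfan q hq).2.2.2.2.2.1) ((hfan q hq).2.2.2.2.1) ((hfan q hq).2.2.1)
        ((hfan q hq).2.1) ((hbex q hq).1) ((hbex q hq).2.1) hh₀? hadj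
    have hsh₀ : ¬ G.Adj s h₀ := fun hadj => contra_head hmax hLc hLnd hLl hsS hsL hh₀? hadj
    set B := bf '' Pfam with hBdef
    set T := insert s (insert h₀ B) with hTdef
    have hsh₀ne : s ≠ h₀ := fun h => hsL (h ▸ hh₀L)
    have hsB : s ∉ B := by
      rintro ⟨q, hq, heq⟩
      exact hsL (heq ▸ hbL q hq)
    have hh₀B : h₀ ∉ B := by
      rintro ⟨q, hq, heq⟩
      exact hh₀b q hq heq.symm
    have hTS : T ⊆ S := by
      rintro x hx
      rcases Set.mem_insert_iff.1 hx with rfl | hx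
      · exact hsS
      rcases Set.mem_insert_iff.1 hx with rfl | ⟨q, hq, rfl⟩
      · exact hh₀S
      · exact (hbex q hq).2.2
    have hTpair : T.Pairwise (fun a b => ¬ G.Adj a b) := by
      intro x hx y hy hne
      rw [hTdef] at hx hy
      rcases Set.mem_insert_iff.1 hx with rfl | hx
      · rcases Set.mem_insert_iff.1 hy with rfl | hy
        · exact absurd rfl hne
        rcases Set.mem_insert_iff.1 hy with rfl | ⟨q, hq, heq⟩
        · exact hsh₀
        · exact heq ▸ hsb q hq
      rcases Set.mem_insert_iff.1 hx with rfl | ⟨q, hq, heq⟩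
      · rcases Set.mem_insert_iff.1 hy with rfl | hy
        · exact fun h => hsh₀ h.symm
        rcases Set.mem_insert_iff.1 hy with rfl | ⟨q, hq, heq⟩
        · exact absurd rfl hne
        · exact heq ▸ hh₀badj q hq
      · rcases Set.mem_insert_iff.1 hy with rfl | hy
        · exact heq ▸ fun h => hsb q hq h.symm
        rcases Set.mem_insert_iff.1 hy with rfl | ⟨q', hq', heq'⟩
        · exact heq ▸ fun h => hh₀badj q hq h.symm
        · refine heq ▸ heq' ▸ hbadj q hq q' hq' ?_
          rintro rfl
          exact hne (heq.symm.trans heq')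
    have hTcard : T.ncard = localConn G s t + 2 := by
      rw [hTdef, Set.ncard_insert_of_notMem (by
            intro h
            rcases Set.mem_insert_iff.1 h with h | h
            · exact hsh₀ne h
            · exact hsB h) ((hPfamfin.image bf).insert h₀),
        Set.ncard_insert_of_notMem hh₀B (hPfamfin.image bf), hBdef,
        Set.ncard_image_of_injOn hbinj, hPfamc]
    -- final contradiction
    have hIbdd : BddAbove {n | ∃ I : Set V, I ⊆ S ∧
        I.Pairwise (fun a b => ¬ G.Adj a b) ∧ I.ncard = n} := by
      refine ⟨Fintype.card V, ?_⟩
      rintro n ⟨I, -, -, rfl⟩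
      calc I.ncard ≤ (Set.univ : Set V).ncard :=
            Set.ncard_le_ncard (Set.subset_univ _) Set.finite_univ
        _ = Fintype.card V := by rw [Set.ncard_univ, Nat.card_eq_fintype_card]
    have hind : localConn G s t + 2 ≤ indepNumOn G S :=
      le_csSup hIbdd ⟨T, hTS, hTpair, hTcard⟩
    have hfinal : ((localConn G s t + 2 : ℕ) : ℕ∞) ≤ ((localConn G s t + 1 : ℕ) : ℕ∞) := by
      calc ((localConn G s t + 2 : ℕ) : ℕ∞) ≤ (indepNumOn G S : ℕ∞) := by
            exact_mod_cast Nat.cast_le.2 hind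
        _ ≤ setConn G S + 1 := hακ
        _ ≤ (localConn G s t : ℕ∞) + 1 := by gcongr
        _ = ((localConn G s t + 1 : ℕ) : ℕ∞) := by push_cast; ring
    rw [Nat.cast_le] at hfinal
    omega
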